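/- Let p be an odd prime, k ∈ ℤ_{>0}, μ = ±1, and m₁, m₂ ∈ ℤ. Then: Σ(1,−1; m₁,m₂) = 1; Σ(1,1; m₁,m₂) = 0; if p^k ≡ μ (mod 4) then Σ(p^k, μ; m₁,m₂) = 0; and if p^k ≡ −μ (mod 4) then Σ(p^k, μ; m₁,m₂) = g(p^k, m₁, p^k). -/

import Mathlib

/-- The Kronecker symbol at a prime `p`. -/
def kronPrime (a : ℤ) (p : ℕ) : ℤ :=
  if p = 2 then (if a % 2 = 0 then 0 else if a % 8 = 1 ∨ a % 8 = 7 then 1 else -1)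
  else jacobiSym a p

/-- The Kronecker symbol `(a/n)`. -/
def kron (a n : ℤ) : ℤ :=
  if n = 0 then (if a = 1 ∨ a = -1 then 1 else 0)
  else (if a < 0 ∧ n < 0 then -1 else 1) *
    n.natAbs.factorization.prod fun p e => kronPrime a p ^ e

/-- `e2pi r = exp(2πir)`. -/
noncomputable def e2pi (r : ℚ) : ℂ :=
  Complex.exp (2 * Real.pi * Complex.I * (r : ℂ))

/-- The set `S(A₁,A₂)` of normalized tuples `(B₁,C₁,B₂,C₂)` satisfying
`A₁C₂ + 4B₁B₂ + C₁A₂ = 0`, the gcd conditions, `Cᵢ ≡ -1 (mod 4)` and the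
normalization inequalities. -/
def PlSet (A₁ A₂ : ℤ) : Set (ℤ × ℤ × ℤ × ℤ) :=
  {v | A₁ * v.2.2.2 + 4 * v.1 * v.2.2.1 + v.2.1 * A₂ = 0 ∧
    Int.gcd A₁ (Int.gcd v.1 v.2.1) = 1 ∧
    Int.gcd A₂ (Int.gcd v.2.2.1 v.2.2.2) = 1 ∧
    v.2.1 ≡ -1 [ZMOD 4] ∧ v.2.2.2 ≡ -1 [ZMOD 4] ∧
    0 ≤ (v.1 : ℚ) / (A₁ : ℚ) ∧ (v.1 : ℚ) / (A₁ : ℚ) < 1 ∧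
    0 ≤ (v.2.2.1 : ℚ) / (A₂ : ℚ) ∧ (v.2.2.1 : ℚ) / (A₂ : ℚ) < 1 ∧
    0 ≤ (v.2.2.2 : ℚ) / (4 * (A₂ : ℚ)) ∧ (v.2.2.2 : ℚ) / (4 * (A₂ : ℚ)) < 1}

/-- The splitting `s` in Plücker coordinates. -/
def ssplit (A₁ A₂ : ℤ) (v : ℤ × ℤ × ℤ × ℤ) : ℤ :=
  let D : ℤ := Int.gcd A₁ A₂
  let D₁ : ℤ := Int.gcd D v.1
  let D₂ : ℤ := D / D₁
  kron (kron (-1) (v.1 / D₁)) (-(A₁ * A₂)) * kron (A₁ / D) (A₂ / D) *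
    kron (v.1 / D₁) (A₁ / D) * kron (4 * v.2.2.1 / D₂) (A₂.sign * A₂ / D) *
    kron D₁ v.2.1 * kron D₂ v.2.2.2

/-- The exponential sum `Σ(A₁,A₂;m₁,m₂)`. -/
noncomputable def SigmaExp (A₁ A₂ m₁ m₂ : ℤ) : ℂ :=
  ∑' v : ↥(PlSet A₁ A₂),
    (ssplit A₁ A₂ v.val : ℂ) *
      e2pi ((m₁ : ℚ) * ((v.val.1 : ℚ) / (A₁ : ℚ)) + (m₂ : ℚ) * ((v.val.2.2.1 : ℚ) / (A₂ : ℚ)))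

/-- The Gauss sum `g(p^j, m, p^t)`, summing over the units of `ℤ/p^tℤ`. -/
noncomputable def gaussG (p j : ℕ) (m : ℚ) (t : ℕ) : ℂ :=
  ∑ x ∈ Finset.filter (fun x => Nat.gcd x (p ^ t) = 1) (Finset.range (p ^ t)),
    (kron (x : ℤ) (p : ℤ) ^ j : ℂ) * e2pi (m * (x : ℚ) / ((p : ℚ) ^ t))


section KronAux

lemma kron_one_right (a : ℤ) : kron a 1 = 1 := by simp [kron]

lemma kron_neg_one_right (a : ℤ) (ha : ¬ a < 0) : kron a (-1) = 1 := by simp [kron, ha]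

lemma kron_one_left (n : ℤ) : kron 1 n = 1 := by
  unfold kron
  split
  · simp
  · rw [Finsupp.prod_congr (g2 := fun _ _ => 1) (by
      intro q hq
      have h1 : kronPrime 1 q = 1 := by
        unfold kronPrime
        split
        · norm_num
        · exact jacobiSym.one_left q
      simp [h1])]
    simp [Finsupp.prod]

lemma kron_prime_pow (p : ℕ) (hp : p.Prime) (hp2 : p ≠ 2) (a : ℤ) (k : ℕ) :
    kron a ((p : ℤ) ^ k) = jacobiSym a p ^ k := by
  have hpp : (0:ℤ) < (p:ℤ) := by exact_mod_cast hp.pos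
  have hp0 : (0:ℤ) < (p:ℤ)^k := pow_pos hpp k
  have hne : ((p:ℤ)^k) ≠ 0 := hp0.ne'
  have habs : ((p:ℤ)^k).natAbs = p ^ k := by rw [Int.natAbs_pow]; simp
  unfold kron
  rw [if_neg hne, habs, hp.factorization_pow, Finsupp.prod_single_index (by simp),
    if_neg (by push_neg; intro _; exact hp0.le)]
  simp [kronPrime, hp2]

lemma kron_neg_prime_pow (p : ℕ) (hp : p.Prime) (hp2 : p ≠ 2) (a : ℤ) (k : ℕ)
    (ha : a < 0) : kron a (-((p : ℤ) ^ k)) = -(jacobiSym a p ^ k) := by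
  have hpp : (0:ℤ) < (p:ℤ) := by exact_mod_cast hp.pos
  have hp0 : (0:ℤ) < (p:ℤ)^k := pow_pos hpp k
  have hne : (-((p:ℤ)^k)) ≠ 0 := by omega
  have habs : (-((p:ℤ)^k)).natAbs = p ^ k := by rw [Int.natAbs_neg, Int.natAbs_pow]; simp
  unfold kron
  rw [if_neg hne, habs, hp.factorization_pow, Finsupp.prod_single_index (by simp),
    if_pos ⟨ha, by omega⟩]
  simp [kronPrime, hp2]

lemma kron_neg_one_left_unit (b : ℤ) : kron (-1) b = 1 ∨ kron (-1) b = -1 := by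
  rw [← Int.isUnit_iff]
  unfold kron
  split
  · simp
  · apply IsUnit.mul
    · split <;> simp
    · rw [Finsupp.prod]
      apply Finset.prod_induction _ IsUnit (fun _ _ => IsUnit.mul) isUnit_one
      intro q hq
      apply IsUnit.pow
      rw [Int.isUnit_iff]
      rw [Nat.support_factorization] at hq
      have hq' : q.Prime := Nat.prime_of_mem_primeFactors hq
      unfold kronPrime
      split
      · norm_num
      · rcases jacobiSym.trichotomy (-1) q with h | h | h
        · exfalso
          rw [jacobiSym.eq_zero_iff] at h
          exact h.2 (by simp [Int.gcd])
        · exact Or.inl h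
        · exact Or.inr h

lemma qbounds_pos {x d y : ℚ} (hd : 0 < d) (hy : y = x / d) (h1 : 0 ≤ y) (h2 : y < 1) :
    0 ≤ x ∧ x < d := by
  subst hy
  constructor
  · have := (le_div_iff₀ hd).mp h1; linarith
  · exact (div_lt_one hd).mp h2

lemma qbounds_neg {x d y : ℚ} (hd : 0 < d) (hy : y = x / (-d)) (h1 : 0 ≤ y) (h2 : y < 1) :
    -d < x ∧ x ≤ 0 := by
  subst hy
  rw [div_neg] at h1 h2
  constructor
  · have h3 : -1 < x / d := by linarith
    have := (lt_div_iff₀ hd).mp h3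
    linarith
  · have h3 : x / d ≤ 0 := by linarith
    have := (div_le_iff₀ hd).mp h3
    linarith

end KronAux

section MainAux

lemma plset_extract (p k : ℕ) (hp : p.Prime) (hk : 0 < k) (μ : ℤ) (hμ : μ = 1 ∨ μ = -1)
    {B₁ C₁ B₂ C₂ : ℤ} (hv : (B₁, C₁, B₂, C₂) ∈ PlSet ((p:ℤ)^k) μ) :
    B₂ = 0 ∧ C₂ = 2*μ+1 ∧ C₁ = -(2+μ)*(p:ℤ)^k ∧ 0 ≤ B₁ ∧ B₁ < (p:ℤ)^k ∧
      Nat.gcd B₁.toNat (p^k) = 1 ∧ (p:ℤ)^k ≡ -μ [ZMOD 4] := by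
  obtain ⟨heq, hg1, hg2, hC1, hC2, h1, h2, h3, h4, h5, h6⟩ := hv
  simp only at heq hg1 hg2 hC1 hC2 h1 h2 h3 h4 h5 h6
  have hpp : (0:ℤ) < (p:ℤ) := by exact_mod_cast hp.pos
  have hP : (0:ℤ) < (p:ℤ)^k := pow_pos hpp k
  have hPQ : (0:ℚ) < (((p:ℤ)^k : ℤ) : ℚ) := by exact_mod_cast hP
  obtain ⟨e1, e2⟩ := qbounds_pos hPQ rfl h1 h2
  have i1 : 0 ≤ B₁ := by exact_mod_cast e1
  have i2 : B₁ < (p:ℤ)^k := by exact_mod_cast e2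
  have hB2 : B₂ = 0 := by
    rcases hμ with rfl | rfl
    · obtain ⟨e3, e4⟩ := qbounds_pos (show (0:ℚ) < 1 by norm_num)
        (show ((B₂:ℚ) / (((1:ℤ)):ℚ)) = (B₂:ℚ)/1 by norm_num) h3 h4
      have i3 : (0:ℤ) ≤ B₂ := by exact_mod_cast e3
      have i4 : B₂ < 1 := by exact_mod_cast e4
      omega
    · obtain ⟨e3, e4⟩ := qbounds_neg (show (0:ℚ) < 1 by norm_num)
        (show ((B₂:ℚ) / (((-1:ℤ)):ℚ)) = (B₂:ℚ)/(-1) by push_cast; ring) h3 h4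
      have i3 : (-1:ℤ) < B₂ := by exact_mod_cast e3
      have i4 : B₂ ≤ 0 := by exact_mod_cast e4
      omega
  have hC2' : C₂ = 2*μ+1 := by
    unfold Int.ModEq at hC2
    rcases hμ with rfl | rfl
    · obtain ⟨e5, e6⟩ := qbounds_pos (show (0:ℚ) < 4 by norm_num)
        (show ((C₂:ℚ) / (4 * ((1:ℤ):ℚ))) = (C₂:ℚ)/4 by push_cast; ring) h5 h6
      have i5 : (0:ℤ) ≤ C₂ := by exact_mod_cast e5
      have i6 : C₂ < 4 := by exact_mod_cast e6
      omega
    · obtain ⟨e5, e6⟩ := qbounds_neg (show (0:ℚ) < 4 by norm_num)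
        (show ((C₂:ℚ) / (4 * ((-1:ℤ):ℚ))) = (C₂:ℚ)/(-4) by push_cast; ring) h5 h6
      have i5 : (-4:ℤ) < C₂ := by exact_mod_cast e5
      have i6 : C₂ ≤ 0 := by exact_mod_cast e6
      omega
  subst hB2 hC2'
  have hC1' : C₁ = -(2+μ)*(p:ℤ)^k := by
    rcases hμ with rfl | rfl <;> [skip; skip] <;>
      · have := heq
        nlinarith [this]
  have hmod : (p:ℤ)^k ≡ -μ [ZMOD 4] := by
    subst hC1'
    unfold Int.ModEq at hC1 ⊢
    rcases hμ with rfl | rfl <;>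
      · ring_nf at hC1 ⊢
        omega
  refine ⟨rfl, rfl, hC1', i1, i2, ?_, hmod⟩
  -- coprimality
  have hpB : ¬ (p:ℤ) ∣ B₁ := by
    intro hd
    have hdP : (p:ℤ) ∣ (p:ℤ)^k := dvd_pow_self _ hk.ne'
    have hdC : (p:ℤ) ∣ C₁ := by
      rw [hC1']; exact Dvd.dvd.mul_left hdP _
    have h5' : (p:ℤ) ∣ (Int.gcd B₁ C₁ : ℤ) := Int.dvd_coe_gcd hd hdC
    have h6' : (p:ℤ) ∣ (Int.gcd ((p:ℤ)^k) (Int.gcd B₁ C₁ : ℤ) : ℤ) := Int.dvd_coe_gcd hdP h5'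
    rw [hg1] at h6'
    have := Int.le_of_dvd one_pos h6'
    have := hp.two_le
    omega
  have : ¬ p ∣ B₁.toNat := by
    intro hh
    apply hpB
    have := Int.natCast_dvd_natCast.mpr hh
    rwa [Int.toNat_of_nonneg i1] at this
  have hcop : Nat.Coprime B₁.toNat p := Nat.coprime_comm.mp ((hp.coprime_iff_not_dvd).mpr this)
  exact (Nat.coprime_pow_right_iff hk _ _).mpr hcop

end MainAux

section MainAux2

lemma plset_empty (p k : ℕ) (hp : p.Prime) (hk : 0 < k) (μ : ℤ) (hμ : μ = 1 ∨ μ = -1)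
    (hmod : (p:ℤ)^k ≡ μ [ZMOD 4]) : PlSet ((p:ℤ)^k) μ = ∅ := by
  ext ⟨B₁, C₁, B₂, C₂⟩
  simp only [Set.mem_empty_iff_false, iff_false]
  intro hv
  obtain ⟨-, -, -, -, -, -, hmod'⟩ := plset_extract p k hp hk μ hμ hv
  unfold Int.ModEq at hmod hmod'
  rcases hμ with rfl | rfl <;> omega

lemma plset_main (p k : ℕ) (hp : p.Prime) (hk : 0 < k) (μ : ℤ) (hμ : μ = 1 ∨ μ = -1)
    (hmod : (p:ℤ)^k ≡ -μ [ZMOD 4]) :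
    PlSet ((p:ℤ)^k) μ =
      ↑(((Finset.range (p^k)).filter (fun x => Nat.gcd x (p^k) = 1)).image
        (fun x : ℕ => ((x:ℤ), -(2+μ)*(p:ℤ)^k, (0:ℤ), 2*μ+1))) := by
  have hpp : (0:ℤ) < (p:ℤ) := by exact_mod_cast hp.pos
  have hP : (0:ℤ) < (p:ℤ)^k := pow_pos hpp k
  have hcast : ((p^k : ℕ) : ℤ) = (p:ℤ)^k := by push_cast; ring
  ext ⟨B₁, C₁, B₂, C₂⟩
  simp only [Finset.coe_image, Set.mem_image, Finset.mem_coe, Finset.mem_filter,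
    Finset.mem_range, Prod.mk.injEq]
  constructor
  · intro hv
    obtain ⟨hB2, hC2, hC1, i1, i2, hcop, -⟩ := plset_extract p k hp hk μ hμ hv
    refine ⟨B₁.toNat, ⟨by omega, hcop⟩, by rw [Int.toNat_of_nonneg i1], hC1.symm, hB2.symm, hC2.symm⟩
  · rintro ⟨x, ⟨hxlt, hxg⟩, rfl, rfl, rfl, rfl⟩
    have hxP : (x:ℤ) < (p:ℤ)^k := by omega
    have hμsq : μ * μ = 1 := by rcases hμ with rfl | rfl <;> norm_num
    simp only [PlSet, Set.mem_setOf_eq]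
    refine ⟨by nlinarith [hμsq], ?_, ?_, ?_, ?_, ?_, ?_, ?_, ?_, ?_, ?_⟩
    · -- gcd (p^k) (gcd x C₁) = 1
      have habs : ((p:ℤ)^k).natAbs = p^k := by rw [Int.natAbs_pow]; simp
      rw [Int.gcd, habs, Int.natAbs_natCast]
      have hg' : Int.gcd (x:ℤ) (-(2+μ)*(p:ℤ)^k) ∣ x := by
        have h9 := Int.gcd_dvd_left (a := (x:ℤ)) (b := -(2+μ)*(p:ℤ)^k)
        exact_mod_cast h9
      exact Nat.coprime_comm.mp (Nat.Coprime.coprime_dvd_left hg' hxg)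
    · -- gcd μ (gcd 0 C₂) = 1
      rcases hμ with rfl | rfl <;> simp [Int.gcd]
    · -- C₁ ≡ -1 [ZMOD 4]
      unfold Int.ModEq at hmod ⊢
      rcases hμ with rfl | rfl <;> (ring_nf at hmod ⊢; omega)
    · -- C₂ ≡ -1 [ZMOD 4]
      rcases hμ with rfl | rfl <;> decide
    · positivity
    · rw [div_lt_one (by exact_mod_cast hP)]
      exact_mod_cast hxP
    · rw [Int.cast_zero, zero_div]
    · rw [Int.cast_zero, zero_div]; norm_num
    · rcases hμ with rfl | rfl <;> norm_num
    · rcases hμ with rfl | rfl <;> norm_num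
end MainAux2

section MainAux3

lemma jac_neg_one_pow (p k : ℕ) (hp : p.Prime) (hp2 : p ≠ 2) (μ : ℤ) (hμ : μ = 1 ∨ μ = -1)
    (hmod : (p:ℤ)^k ≡ -μ [ZMOD 4]) : jacobiSym (-1) p ^ k = -μ := by
  have hodd : Odd p := hp.odd_of_ne_two hp2
  rw [jacobiSym.at_neg_one hodd, ← map_pow]
  have h4 : (((p:ℤ)^k : ℤ) : ZMod 4) = ((-μ : ℤ) : ZMod 4) :=
    (ZMod.intCast_eq_intCast_iff _ _ 4).mpr (by exact_mod_cast hmod)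
  push_cast at h4
  rw [h4]
  rcases hμ with rfl | rfl <;> decide

lemma ssplit_main (p k : ℕ) (hp : p.Prime) (hp2 : p ≠ 2) (hk : 0 < k) (μ : ℤ)
    (hμ : μ = 1 ∨ μ = -1) (hmod : (p:ℤ)^k ≡ -μ [ZMOD 4]) (x : ℕ) :
    ssplit ((p:ℤ)^k) μ ((x:ℤ), -(2+μ)*(p:ℤ)^k, (0:ℤ), 2*μ+1) = jacobiSym (x:ℤ) p ^ k := by
  have hpp : (0:ℤ) < (p:ℤ) := by exact_mod_cast hp.pos
  have hP : (0:ℤ) < (p:ℤ)^k := pow_pos hpp k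
  have hgcd : Int.gcd ((p:ℤ)^k) μ = 1 := by rcases hμ with rfl | rfl <;> simp
  unfold ssplit
  simp only [hgcd, Nat.cast_one, Int.one_gcd, Int.ediv_one, mul_zero, Int.zero_ediv]
  have ht1 : kron (kron (-1) (x:ℤ)) (-((p:ℤ)^k * μ)) = 1 := by
    rcases kron_neg_one_left_unit (x:ℤ) with h | h <;> rw [h]
    · exact kron_one_left _
    · rcases hμ with rfl | rfl
      · rw [mul_one, kron_neg_prime_pow p hp hp2 (-1) k (by norm_num),
          jac_neg_one_pow p k hp hp2 1 (Or.inl rfl) hmod]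
        norm_num
      · rw [mul_neg_one, neg_neg, kron_prime_pow p hp hp2 (-1) k,
          jac_neg_one_pow p k hp hp2 (-1) (Or.inr rfl) hmod]
        norm_num
  have ht2 : kron ((p:ℤ)^k) μ = 1 := by
    rcases hμ with rfl | rfl
    · exact kron_one_right _
    · exact kron_neg_one_right _ (by omega)
  have ht3 : kron ((x:ℤ)) ((p:ℤ)^k) = jacobiSym (x:ℤ) p ^ k :=
    kron_prime_pow p hp hp2 _ k
  have ht4 : kron 0 (μ.sign * μ) = 1 := by
    have : μ.sign * μ = 1 := by rcases hμ with rfl | rfl <;> decide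
    rw [this]; exact kron_one_right _
  have ht5 : kron 1 (-(2+μ)*(p:ℤ)^k) = 1 := kron_one_left _
  have ht6 : kron 1 (2*μ+1) = 1 := kron_one_left _
  rw [ht1, ht2, ht3, ht4, ht5, ht6]
  ring

end MainAux3

section OneCases

lemma plset_one_neg_one : PlSet 1 (-1) = {((0:ℤ), -1, 0, -1)} := by
  ext ⟨B₁, C₁, B₂, C₂⟩
  simp only [PlSet, Set.mem_setOf_eq, Set.mem_singleton_iff, Prod.mk.injEq]
  constructor
  · rintro ⟨heq, -, -, hC1, hC2, h1, h2, h3, h4, h5, h6⟩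
    obtain ⟨e1, e2⟩ := qbounds_pos (show (0:ℚ) < 1 by norm_num)
      (show ((B₁:ℚ) / (((1:ℤ)):ℚ)) = (B₁:ℚ)/1 by norm_num) h1 h2
    obtain ⟨e3, e4⟩ := qbounds_neg (show (0:ℚ) < 1 by norm_num)
      (show ((B₂:ℚ) / (((-1:ℤ)):ℚ)) = (B₂:ℚ)/(-1) by push_cast; ring) h3 h4
    obtain ⟨e5, e6⟩ := qbounds_neg (show (0:ℚ) < 4 by norm_num)
      (show ((C₂:ℚ) / (4 * ((-1:ℤ):ℚ))) = (C₂:ℚ)/(-4) by push_cast; ring) h5 h6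
    have i1 : (0:ℤ) ≤ B₁ := by exact_mod_cast e1
    have i2 : B₁ < 1 := by exact_mod_cast e2
    have i3 : (-1:ℤ) < B₂ := by exact_mod_cast e3
    have i4 : B₂ ≤ 0 := by exact_mod_cast e4
    have i5 : (-4:ℤ) < C₂ := by exact_mod_cast e5
    have i6 : C₂ ≤ 0 := by exact_mod_cast e6
    unfold Int.ModEq at hC1 hC2
    have hB1 : B₁ = 0 := by omega
    have hB2 : B₂ = 0 := by omega
    subst hB1 hB2
    omega
  · rintro ⟨rfl, rfl, rfl, rfl⟩
    refine ⟨by norm_num, by decide, by decide, by decide, by decide, ?_, ?_, ?_, ?_, ?_, ?_⟩ <;>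
      norm_num

lemma plset_one_one : PlSet 1 1 = ∅ := by
  ext ⟨B₁, C₁, B₂, C₂⟩
  simp only [PlSet, Set.mem_setOf_eq, Set.mem_empty_iff_false, iff_false]
  rintro ⟨heq, -, -, hC1, hC2, h1, h2, h3, h4, h5, h6⟩
  obtain ⟨e3, e4⟩ := qbounds_pos (show (0:ℚ) < 1 by norm_num)
    (show ((B₂:ℚ) / (((1:ℤ)):ℚ)) = (B₂:ℚ)/1 by norm_num) h3 h4
  obtain ⟨e5, e6⟩ := qbounds_pos (show (0:ℚ) < 4 by norm_num)
    (show ((C₂:ℚ) / (4 * ((1:ℤ):ℚ))) = (C₂:ℚ)/4 by push_cast; ring) h5 h6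
  have i3 : (0:ℤ) ≤ B₂ := by exact_mod_cast e3
  have i4 : B₂ < 1 := by exact_mod_cast e4
  have i5 : (0:ℤ) ≤ C₂ := by exact_mod_cast e5
  have i6 : C₂ < 4 := by exact_mod_cast e6
  unfold Int.ModEq at hC1 hC2
  have hB2 : B₂ = 0 := by omega
  subst hB2
  omega

lemma sigma_one_neg_one (m₁ m₂ : ℤ) : SigmaExp 1 (-1) m₁ m₂ = 1 := by
  unfold SigmaExp
  rw [plset_one_neg_one]
  rw [show ∑' (v : ↑({((0:ℤ), -1, 0, -1)} : Set (ℤ×ℤ×ℤ×ℤ))), (ssplit 1 (-1) v.val : ℂ) *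
      e2pi ((m₁ : ℚ) * ((v.val.1 : ℚ) / ((1:ℤ) : ℚ)) + (m₂ : ℚ) * ((v.val.2.2.1 : ℚ) / ((-1:ℤ) : ℚ)))
      = (ssplit 1 (-1) ((0:ℤ),-1,0,-1) : ℂ) *
      e2pi ((m₁ : ℚ) * ((((0:ℤ),-1,0,-1):ℤ×ℤ×ℤ×ℤ).1 / ((1:ℤ) : ℚ)) +
        (m₂ : ℚ) * (((((0:ℤ),-1,0,-1):ℤ×ℤ×ℤ×ℤ)).2.2.1 / ((-1:ℤ) : ℚ)))
      from tsum_singleton ((0:ℤ),(-1:ℤ),(0:ℤ),(-1:ℤ))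
        (fun w => (ssplit 1 (-1) w : ℂ) * e2pi ((m₁:ℚ) * ((w.1:ℚ)/((1:ℤ):ℚ)) +
          (m₂:ℚ) * ((w.2.2.1:ℚ)/(((-1:ℤ)):ℚ))))]
  have hs : ssplit 1 (-1) ((0:ℤ), -1, 0, -1) = 1 := by
    unfold ssplit
    norm_num [Int.gcd, kron_one_right, kron_one_left]
  rw [hs]
  norm_num [e2pi]

lemma sigma_one_one (m₁ m₂ : ℤ) : SigmaExp 1 1 m₁ m₂ = 0 := by
  unfold SigmaExp
  rw [plset_one_one]
  exact tsum_empty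

end OneCases

section FinalAssembly

lemma sigma_empty_case (p k : ℕ) (hp : p.Prime) (hk : 0 < k) (μ : ℤ) (hμ : μ = 1 ∨ μ = -1)
    (m₁ m₂ : ℤ) (hmod : (p:ℤ)^k ≡ μ [ZMOD 4]) : SigmaExp ((p:ℤ)^k) μ m₁ m₂ = 0 := by
  unfold SigmaExp
  rw [plset_empty p k hp hk μ hμ hmod]
  exact tsum_empty

lemma sigma_main_case (p k : ℕ) (hp : p.Prime) (hp2 : p ≠ 2) (hk : 0 < k) (μ : ℤ)
    (hμ : μ = 1 ∨ μ = -1) (m₁ m₂ : ℤ) (hmod : (p:ℤ)^k ≡ -μ [ZMOD 4]) :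
    SigmaExp ((p:ℤ)^k) μ m₁ m₂ = gaussG p k m₁ k := by
  classical
  set F : Finset ℕ := (Finset.range (p^k)).filter (fun x => Nat.gcd x (p^k) = 1) with hF
  set emb : ℕ → ℤ×ℤ×ℤ×ℤ := fun x : ℕ => ((x:ℤ), -(2+μ)*(p:ℤ)^k, (0:ℤ), 2*μ+1) with hemb
  set f : ℤ×ℤ×ℤ×ℤ → ℂ := fun w => (ssplit ((p:ℤ)^k) μ w : ℂ) *
      e2pi ((m₁:ℚ) * ((w.1:ℚ)/(((p:ℤ)^k : ℤ):ℚ)) + (m₂:ℚ) * ((w.2.2.1:ℚ)/((μ:ℤ):ℚ))) with hf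
  unfold SigmaExp
  rw [plset_main p k hp hk μ hμ hmod]
  rw [show ∑' (v : ↑((↑(F.image emb) : Set (ℤ×ℤ×ℤ×ℤ)))), f v.val = ∑ w ∈ F.image emb, f w
    from Finset.tsum_subtype' (F.image emb) f]
  rw [Finset.sum_image (by
    intro a _ b _ hab
    have : ((a:ℤ)) = ((b:ℤ)) := congrArg Prod.fst hab
    exact_mod_cast this)]
  unfold gaussG
  rw [← hF]
  refine Finset.sum_congr rfl ?_
  intro x hx
  rw [hf, hemb]
  simp only
  rw [ssplit_main p k hp hp2 hk μ hμ hmod x]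
  have hkron : kron (x:ℤ) (p:ℤ) = jacobiSym (x:ℤ) p := by
    have h1 := kron_prime_pow p hp hp2 (x:ℤ) 1
    simpa using h1
  rw [hkron]
  have harg : (m₁:ℚ) * ((((x:ℕ):ℤ):ℚ)/(((p:ℤ)^k : ℤ):ℚ)) + (m₂:ℚ) * (((0:ℤ):ℚ)/((μ:ℤ):ℚ))
      = (m₁:ℚ) * ((x:ℕ):ℚ) / ((p:ℚ)^k) := by
    push_cast
    rw [zero_div, mul_zero, add_zero, mul_div_assoc]
  rw [harg]
  push_cast
  ring

end FinalAssembly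


/-- Values of `Σ(1,±1;m₁,m₂)` and `Σ(p^k,±1;m₁,m₂)` for an odd prime `p`. -/
theorem sigma_prime_power_one (p : ℕ) (hp : p.Prime) (hp2 : p ≠ 2) (k : ℕ) (hk : 0 < k)
    (μ : ℤ) (hμ : μ = 1 ∨ μ = -1) (m₁ m₂ : ℤ) :
    SigmaExp 1 (-1) m₁ m₂ = 1 ∧
    SigmaExp 1 1 m₁ m₂ = 0 ∧
    ((p : ℤ) ^ k ≡ μ [ZMOD 4] → SigmaExp ((p : ℤ) ^ k) μ m₁ m₂ = 0) ∧
    ((p : ℤ) ^ k ≡ -μ [ZMOD 4] → SigmaExp ((p : ℤ) ^ k) μ m₁ m₂ = gaussG p k m₁ k) := by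
  exact ⟨sigma_one_neg_one m₁ m₂, sigma_one_one m₁ m₂,
    fun hmod => sigma_empty_case p k hp hk μ hμ m₁ m₂ hmod,
    fun hmod => sigma_main_case p k hp hp2 hk μ hμ m₁ m₂ hmod⟩
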